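/- Let V be a vector space over ℚ, let n be a natural number, and let f : ℤⁿ → V be an additive group homomorphism whose kernel is a free abelian group of rank ρ (equivalently, whose kernel has ℤ-rank ρ). Then the torsion subgroup of the quotient abelian group V/f(ℤⁿ) is isomorphic, as an abelian group, to (ℚ/ℤ)^{n−ρ}. -/

import Mathlib

/-- Congruence between a quotient by a `ℤ`-submodule and by an `AddSubgroup`
with the same carrier. -/
noncomputable def quotSubmoduleAddSubgroupCongr {M : Type*} [AddCommGroup M]
    (p : Submodule ℤ M) (H : AddSubgroup M) (h : ∀ x, x ∈ p ↔ x ∈ H) :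
    (M ⧸ p) ≃+ (M ⧸ H) := by
  refine AddMonoidHom.toAddEquiv
    ((p.liftQ (QuotientAddGroup.mk' H).toIntLinearMap ?_).toAddMonoidHom)
    (QuotientAddGroup.lift H (p.mkQ.toAddMonoidHom) ?_) ?_ ?_
  · intro x hx
    simp; exact (h x).mp hx
  · intro x hx
    simpa using (Submodule.Quotient.mk_eq_zero p).mpr ((h x).mpr hx)
  · ext x
    obtain ⟨a, rfl⟩ := Submodule.Quotient.mk_surjective p x
    rfl
  · ext x
    rfl

/-- AddEquiv between a `ℤ`-submodule and an `AddSubgroup` with the same carrier. -/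
def subCongr {M : Type*} [AddCommGroup M] (p : Submodule ℤ M) (H : AddSubgroup M)
    (h : ∀ x, x ∈ p ↔ x ∈ H) : p ≃+ H where
  toFun x := ⟨x.1, (h _).mp x.2⟩
  invFun x := ⟨x.1, (h _).mpr x.2⟩
  left_inv _ := rfl
  right_inv _ := rfl
  map_add' _ _ := rfl


theorem map_span_basis_eq_pi {W : Type*} [AddCommGroup W] [Module ℚ W] (r : ℕ)
    (B : Module.Basis (Fin r) ℚ W) :
    Submodule.map ((B.equivFun.restrictScalars ℤ : W ≃ₗ[ℤ] (Fin r → ℚ)) :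
        W →ₗ[ℤ] (Fin r → ℚ))
      (Submodule.span ℤ (Set.range B)) =
    Submodule.pi Set.univ (fun _ : Fin r => Submodule.span ℤ {(1 : ℚ)}) := by
  classical
  rw [Submodule.map_span, ← Set.range_comp]
  have hrange : (⇑((B.equivFun.restrictScalars ℤ : W ≃ₗ[ℤ] (Fin r → ℚ)) :
      W →ₗ[ℤ] (Fin r → ℚ)) ∘ ⇑B) = fun i (j : Fin r) => if i = j then (1 : ℚ) else 0 := by
    funext i j
    exact B.equivFun_self i j
  rw [hrange]
  apply le_antisymm
  · rw [Submodule.span_le]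
    rintro _ ⟨i, rfl⟩
    intro j _
    by_cases h : i = j
    · simp only [h, if_pos rfl]
      exact Submodule.mem_span_singleton_self _
    · simp only [if_neg h]
      exact Submodule.zero_mem _
  · intro x hx
    have hx' : ∀ j, ∃ m : ℤ, (m : ℚ) = x j := by
      intro j
      obtain ⟨m, hm⟩ := Submodule.mem_span_singleton.mp (hx j (Set.mem_univ j))
      exact ⟨m, by simpa using hm⟩
    choose m hm using hx'
    have hxe : x = ∑ i : Fin r, m i • (fun j => if i = j then (1 : ℚ) else 0) := by
      funext k
      rw [Finset.sum_apply]
      have : ∀ i, (m i • (fun j => if i = j then (1 : ℚ) else 0)) k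
          = if i = k then (m i : ℚ) else 0 := by
        intro i
        simp only [Pi.smul_apply]
        split <;> simp
      rw [Finset.sum_congr rfl fun i _ => this i, Finset.sum_ite_eq' Finset.univ k, if_pos (Finset.mem_univ k), hm k]
    rw [hxe]
    exact Submodule.sum_mem _ fun i _ =>
      Submodule.smul_mem _ _ (Submodule.subset_span ⟨i, rfl⟩)


/-- Let `V` be a `ℚ`-vector space, `n` a natural number, and
`f : ℤⁿ → V` an additive group homomorphism whose kernel is a free abelian
group of rank `ρ`.  Then the torsion subgroup of `V ⧸ f(ℤⁿ)` is isomorphic to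
`(ℚ/ℤ)^{n-ρ}`. -/
theorem torsion_quotient_range_equiv_qmodz_pow
    {V : Type*} [AddCommGroup V] [Module ℚ V] (n ρ : ℕ)
    (f : (Fin n → ℤ) →+ V)
    [Module.Free ℤ f.ker] [Module.Finite ℤ f.ker]
    (hrank : Module.finrank ℤ f.ker = ρ) :
    Nonempty ((AddCommGroup.torsion (V ⧸ f.range)) ≃+
      (Fin (n - ρ) → ℚ ⧸ AddSubgroup.zmultiples (1 : ℚ))) := by
  classical
  set g : (Fin n → ℤ) →ₗ[ℤ] V := f.toIntLinearMap with hg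
  set L : Submodule ℤ V := LinearMap.range g with hL
  have hmemL : ∀ v : V, v ∈ f.range ↔ v ∈ L := fun v => Iff.rfl
  have kerEquiv : (LinearMap.ker g) ≃+ f.ker :=
    { toFun := fun x => ⟨x.1, x.2⟩
      invFun := fun x => ⟨x.1, x.2⟩
      left_inv := fun _ => rfl
      right_inv := fun _ => rfl
      map_add' := fun _ _ => rfl }
  -- rank computation: finrank ℤ L = n - ρ
  have hrankL : Module.finrank ℤ L = n - ρ := by
    have h1 := LinearMap.lift_rank_range_add_rank_ker (R := ℤ) g
    have h2 : Module.rank ℤ (LinearMap.ker g) = (ρ : Cardinal) := by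
      rw [kerEquiv.toIntLinearEquiv.rank_eq, ← Module.finrank_eq_rank, hrank]
    have h3 : Module.rank ℤ L =
        (Module.finrank ℤ L : Cardinal) := (Module.finrank_eq_rank _ _).symm
    rw [h2, h3] at h1
    have h4 : Module.rank ℤ (Fin n → ℤ) = (n : Cardinal) := by simp
    rw [h4] at h1
    simp only [Cardinal.lift_natCast] at h1
    have h5 : Module.finrank ℤ L + ρ = n := by exact_mod_cast h1
    omega
  -- W = rational span of L
  set W : Submodule ℚ V := Submodule.span ℚ (L : Set V) with hWdef
  have hW : ∀ v : V, v ∈ W ↔ ∃ m : ℤ, m ≠ 0 ∧ m • v ∈ L := by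
    set T : Submodule ℚ V :=
      { carrier := {v | ∃ m : ℤ, m ≠ 0 ∧ m • v ∈ L}
        add_mem' := by
          rintro a b ⟨m, hm, hma⟩ ⟨k, hk, hkb⟩
          refine ⟨m * k, mul_ne_zero hm hk, ?_⟩
          rw [smul_add]
          exact L.add_mem (by rw [mul_comm, mul_smul]; exact L.smul_mem k hma)
            (by rw [mul_smul]; exact L.smul_mem m hkb)
        zero_mem' := ⟨1, one_ne_zero, by simp⟩
        smul_mem' := by
          rintro c v ⟨m, hm, hmv⟩
          refine ⟨m * c.den, mul_ne_zero hm (by exact_mod_cast c.den_ne_zero), ?_⟩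
          have hden : (c.den : ℚ) ≠ 0 := by exact_mod_cast c.den_ne_zero
          have hdc : (c.den : ℚ) * c = (c.num : ℚ) := by
            rw [mul_comm, eq_comm, ← div_eq_iff hden]; exact Rat.num_div_den c
          have key : (m * (c.den : ℤ)) • (c • v) = c.num • (m • v) := by
            rw [← Int.cast_smul_eq_zsmul ℚ (m * (c.den : ℤ)), smul_smul]
            rw [← Int.cast_smul_eq_zsmul ℚ c.num, ← Int.cast_smul_eq_zsmul ℚ m, smul_smul]
            congr 1
            push_cast
            rw [mul_assoc, hdc]
            ring
          rw [key]
          exact L.smul_mem _ hmv } with hT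
    intro v
    have hWT : Submodule.span ℚ (L : Set V) = T := by
      apply le_antisymm
      · rw [Submodule.span_le]
        intro x hx
        exact ⟨1, one_ne_zero, by simpa using hx⟩
      · intro x hx
        obtain ⟨m, hm, hmx⟩ := hx
        have h1 : (m : ℚ) • x ∈ Submodule.span ℚ (L : Set V) := by
          rw [Int.cast_smul_eq_zsmul]; exact Submodule.subset_span hmx
        have h2 := Submodule.smul_mem _ ((m : ℚ)⁻¹) h1
        rwa [smul_smul, inv_mul_cancel₀ (by exact_mod_cast hm), one_smul] at h2
    rw [hWdef, hWT]; rfl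
  -- the map ψ : W → V ⧸ f.range
  set ι : W →ₗ[ℤ] V := (Submodule.subtype W).restrictScalars ℤ with hι
  set ψ : W →ₗ[ℤ] (V ⧸ f.range) :=
    ((QuotientAddGroup.mk' f.range).toIntLinearMap).comp ι with hψ
  have hψx : ∀ x : W, ψ x = QuotientAddGroup.mk (x : V) := fun x => rfl
  set L' : Submodule ℤ W := Submodule.comap ι L with hL'
  have hker : LinearMap.ker ψ = L' := by
    ext x
    simp [hψ, hL', hι, QuotientAddGroup.eq_zero_iff, hmemL]
  have hrange : ∀ y, y ∈ LinearMap.range ψ ↔ y ∈ AddCommGroup.torsion (V ⧸ f.range) := by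
    intro y
    rw [AddCommGroup.mem_torsion]
    constructor
    · rintro ⟨x, rfl⟩
      obtain ⟨m, hm, hmx⟩ := (hW x).mp x.2
      refine isOfFinAddOrder_iff_nsmul_eq_zero.mpr ⟨m.natAbs, Int.natAbs_pos.mpr hm, ?_⟩
      rw [hψx]
      have hmmk : (m.natAbs : ℕ) • (QuotientAddGroup.mk (x : V) : V ⧸ f.range)
          = QuotientAddGroup.mk ((m.natAbs : ℤ) • (x : V)) := by
        rw [← natCast_zsmul]
        rfl
      rw [hmmk, QuotientAddGroup.eq_zero_iff, hmemL]
      rcases Int.natAbs_eq m with h | h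
      · rw [← h]; exact hmx
      · have h2 : (m.natAbs : ℤ) = -m := by omega
        rw [h2, neg_smul]; exact L.neg_mem hmx
    · intro hy
      obtain ⟨v, rfl⟩ := QuotientAddGroup.mk_surjective y
      obtain ⟨k, hk, hky⟩ := isOfFinAddOrder_iff_nsmul_eq_zero.mp hy
      have h0 : (QuotientAddGroup.mk' f.range) ((k : ℕ) • v) = 0 := by
        rw [map_nsmul]
        exact hky
      have hkv : (k : ℤ) • v ∈ L := by
        rw [← hmemL, natCast_zsmul]
        exact (QuotientAddGroup.eq_zero_iff _).mp h0
      have hvW : v ∈ W := (hW v).mpr ⟨k, by exact_mod_cast hk.ne', hkv⟩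
      exact ⟨⟨v, hvW⟩, (hψx _)⟩
  -- basis of L, promoted to basis of W
  haveI : IsAddTorsionFree V := IsAddTorsionFree.of_module_rat V
  have bL : Module.Basis (Fin (n - ρ)) ℤ L := (Module.finBasis ℤ L).reindex (finCongr hrankL)
  set w : Fin (n - ρ) → W := fun i => ⟨(bL i : V), Submodule.subset_span (bL i).2⟩ with hw
  have hspanL : Submodule.span ℤ (Set.range (fun i => (bL i : V))) = L := by
    apply le_antisymm
    · rw [Submodule.span_le]; rintro _ ⟨i, rfl⟩; exact (bL i).2
    · intro l hl
      have h1 : (⟨l, hl⟩ : L) ∈ Submodule.span ℤ (Set.range bL) := by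
        rw [bL.span_eq]; trivial
      have h2 : l ∈ Submodule.map (Submodule.subtype L) (Submodule.span ℤ (Set.range bL)) :=
        ⟨⟨l, hl⟩, h1, rfl⟩
      rw [Submodule.map_span] at h2
      convert h2 using 2
      rw [← Set.range_comp]
      rfl
  have hli : LinearIndependent ℚ w := by
    have liZ : LinearIndependent ℤ (fun i => (bL i : V)) :=
      bL.linearIndependent.map' L.subtype (Submodule.ker_subtype L)
    have liQ : LinearIndependent ℚ (fun i => (bL i : V)) :=
      (LinearIndependent.iff_fractionRing ℤ ℚ).mp liZ
    exact liQ.of_comp ((Submodule.subtype W).restrictScalars ℚ)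
  have hspan : ⊤ ≤ Submodule.span ℚ (Set.range w) := by
    have hLsub : (L : Set V) ⊆
        (Submodule.span ℚ (Set.range (fun i => (bL i : V))) : Set V) := by
      intro l hl
      exact Submodule.span_le_restrictScalars ℤ ℚ _ (hspanL.symm ▸ hl)
    intro x _
    have hx : (x : V) ∈ Submodule.span ℚ (Set.range (fun i => (bL i : V))) :=
      (Submodule.span_le.mpr hLsub) x.2
    obtain ⟨c, hc⟩ := (Submodule.mem_span_range_iff_exists_fun ℚ).mp hx
    apply (Submodule.mem_span_range_iff_exists_fun ℚ).mpr
    refine ⟨c, Subtype.ext ?_⟩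
    rw [← hc]
    push_cast
    rfl
  set B : Module.Basis (Fin (n - ρ)) ℚ W := Module.Basis.mk hli hspan with hB
  set e : W ≃ₗ[ℤ] (Fin (n - ρ) → ℚ) := (B.equivFun : W ≃ₗ[ℚ] _).restrictScalars ℤ with he
  set P : Submodule ℤ (Fin (n - ρ) → ℚ) :=
    Submodule.pi Set.univ (fun _ => Submodule.span ℤ {(1 : ℚ)}) with hP
  have hinj : Function.Injective ι := fun a b hab => Subtype.ext hab
  have hmap : Submodule.map ι (Submodule.span ℤ (Set.range w)) = L := by
    rw [Submodule.map_span, ← Set.range_comp]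
    exact hspanL
  have hL'eq : L' = Submodule.span ℤ (Set.range w) := by
    rw [hL', ← hmap, Submodule.comap_map_eq_of_injective hinj]
  have hwB : Set.range w = Set.range ⇑B := by rw [hB, Module.Basis.coe_mk]
  have himage : L'.map (e : W →ₗ[ℤ] (Fin (n - ρ) → ℚ)) = P := by
    rw [hL'eq, hwB, he, hP]
    exact map_span_basis_eq_pi _ B
  -- assemble
  refine ⟨((subCongr _ _ hrange).symm.trans
    (ψ.quotKerEquivRange.symm.toAddEquiv)).trans ?_⟩
  refine ((Submodule.quotEquivOfEq _ _ hker).toAddEquiv).trans ?_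
  refine ((Submodule.Quotient.equiv L' P e himage).toAddEquiv).trans ?_
  refine ((Submodule.quotientPi _).toAddEquiv).trans ?_
  exact AddEquiv.piCongrRight fun i => quotSubmoduleAddSubgroupCongr _ _ (by
    intro x
    simp [Submodule.mem_span_singleton, AddSubgroup.mem_zmultiples_iff])
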